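/- Let G_1, G_2 be simple graphs on n_1, n_2 vertices, with complements Ḡ_1, Ḡ_2. Then the complement of the disjoint union G_1 ⊕ G_2 equals the join Ḡ_1 ∨ Ḡ_2; consequently, the signless Laplacian characteristic polynomial of G_1 ∨ G_2 on n = n_1 + n_2 vertices equals f_{Q(G_1∨G_2)}(λ) = (-1)^{n_2} f_{Q_1}(λ - n_2) f_{Q̄_2}(n - λ - 2) + (-1)^{n_1} f_{Q_2}(λ - n_1) f_{Q̄_1}(n - λ - 2) - (-1)^{n_1+n_2} f_{Q̄_1}(n - λ - 2) f_{Q̄_2}(n - λ - 2). -/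

import Mathlib

open Matrix BigOperators

/-- The signless Laplacian `Q(G) = D(G) + A(G)` of a simple graph. -/
def signlessLaplacian {V : Type*} [Fintype V] [DecidableEq V]
    (G : SimpleGraph V) [DecidableRel G.Adj] : Matrix V V ℝ :=
  Matrix.diagonal (fun v => (G.degree v : ℝ)) + G.adjMatrix ℝ

instance {α β : Type*} (G1 : SimpleGraph α) (G2 : SimpleGraph β)
    [DecidableRel G1.Adj] [DecidableRel G2.Adj] : DecidableRel (G1 ⊕g G2).Adj := fun x y => by
  cases x <;> cases y <;> simp only [SimpleGraph.sum_adj] <;> infer_instance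

/-- The join `G1 ∨ G2` of two graphs: the disjoint union together with all edges between
the two vertex sets.  Equivalently, the complement of the disjoint sum of the complements. -/
def gJoin {α β : Type*} (G1 : SimpleGraph α) (G2 : SimpleGraph β) : SimpleGraph (α ⊕ β) :=
  (G1ᶜ ⊕g G2ᶜ)ᶜ

instance {α β : Type*} [DecidableEq α] [DecidableEq β]
    (G1 : SimpleGraph α) (G2 : SimpleGraph β)
    [DecidableRel G1.Adj] [DecidableRel G2.Adj] : DecidableRel (gJoin G1 G2).Adj :=
  inferInstanceAs (DecidableRel (G1ᶜ ⊕g G2ᶜ)ᶜ.Adj)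

section generic
variable {m p : Type*} [Fintype m] [DecidableEq m] [Fintype p] [DecidableEq p]

lemma det_add_vecMulVec (A : Matrix m m ℝ) (hA : IsUnit A.det) (u v : m → ℝ) :
    (A + vecMulVec u v).det = A.det * (1 + v ⬝ᵥ A⁻¹ *ᵥ u) := by
  rw [vecMulVec_eq Unit, det_add_replicateCol_mul_replicateRow hA]
  congr 1
  rw [det_unique]
  simp [Matrix.mul_apply, dotProduct, mulVec, Finset.mul_sum, Finset.sum_mul]
  rw [Finset.sum_comm]
  simp [mul_assoc]

lemma vecMulVec_mul_vecMulVec (M : Matrix m m ℝ) (u : m → ℝ) (v w : p → ℝ) :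
    vecMulVec v u * M * vecMulVec u w = (u ⬝ᵥ M *ᵥ u) • vecMulVec v w := by
  ext i j
  simp [Matrix.mul_apply, vecMulVec_apply, dotProduct, mulVec, Finset.mul_sum,
    Finset.sum_mul, smul_eq_mul]
  rw [Finset.sum_comm]
  apply Finset.sum_congr rfl; intro k _
  apply Finset.sum_congr rfl; intro l _
  ring
end generic

section generic2
variable {m p : Type*} [Fintype m] [DecidableEq m] [Fintype p] [DecidableEq p]

lemma key_generic (A : Matrix m m ℝ) (B : Matrix p p ℝ) (hA : IsUnit A.det) (hB : IsUnit B.det) :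
    (fromBlocks A (-vecMulVec (1 : m → ℝ) (1 : p → ℝ)) (-vecMulVec (1 : p → ℝ) (1 : m → ℝ))
        B).det =
      A.det * (B + vecMulVec 1 1).det + B.det * (A + vecMulVec 1 1).det
        - (A + vecMulVec 1 1).det * (B + vecMulVec 1 1).det := by
  haveI := A.invertibleOfIsUnitDet hA
  set α := (1 : m → ℝ) ⬝ᵥ A⁻¹ *ᵥ (1 : m → ℝ) with hα
  set β := (1 : p → ℝ) ⬝ᵥ B⁻¹ *ᵥ (1 : p → ℝ) with hβ
  rw [det_fromBlocks₁₁, invOf_eq_nonsing_inv]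
  simp only [Matrix.neg_mul, Matrix.mul_neg, neg_neg, sub_neg_eq_add]
  rw [_root_.vecMulVec_mul_vecMulVec, ← hα]
  have h1 : B - α • vecMulVec (1 : p → ℝ) 1 = B + vecMulVec ((-α) • (1 : p → ℝ)) 1 := by
    ext i j; simp [vecMulVec_apply, smul_eq_mul]; ring
  rw [h1, det_add_vecMulVec B hB, det_add_vecMulVec A hA, det_add_vecMulVec B hB,
    mulVec_smul, dotProduct_smul, ← hβ]
  simp only [smul_eq_mul]
  ring
end generic2

section poly
open Polynomial
variable {m p : Type*} [Fintype m] [DecidableEq m] [Fintype p] [DecidableEq p]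

lemma eval_det_map (M : Matrix m m ℝ[X]) (lam : ℝ) :
    Polynomial.eval lam M.det = (M.map (Polynomial.eval lam)).det := by
  have := RingHom.map_det (Polynomial.evalRingHom lam) M
  simpa using this

lemma map_charmatrix (N : Matrix m m ℝ) (lam : ℝ) :
    (charmatrix N).map (Polynomial.eval lam) = lam • (1 : Matrix m m ℝ) - N := by
  ext i j
  by_cases h : i = j <;>
    simp [charmatrix_apply, h, Matrix.one_apply, Matrix.diagonal_apply, smul_eq_mul]

lemma map_ones (lam : ℝ) :
    (vecMulVec (1 : m → ℝ[X]) (1 : p → ℝ[X])).map (Polynomial.eval lam) = vecMulVec 1 1 := by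
  ext i j; simp [vecMulVec_apply]

lemma eval_charpoly' (N : Matrix m m ℝ) (lam : ℝ) :
    Polynomial.eval lam N.charpoly = (lam • (1 : Matrix m m ℝ) - N).det := by
  rw [Matrix.charpoly, eval_det_map, map_charmatrix]

lemma keyDet (N1 : Matrix m m ℝ) (N2 : Matrix p p ℝ) (lam : ℝ) :
    (fromBlocks (lam • 1 - N1) (-vecMulVec 1 1) (-vecMulVec 1 1) (lam • 1 - N2)).det =
      (lam • 1 - N1).det * (lam • 1 - N2 + vecMulVec 1 1).det
      + (lam • 1 - N2).det * (lam • 1 - N1 + vecMulVec 1 1).det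
      - (lam • 1 - N1 + vecMulVec 1 1).det * (lam • 1 - N2 + vecMulVec 1 1).det := by
  set P : ℝ[X] := (fromBlocks (charmatrix N1) (-vecMulVec 1 1)
      (-vecMulVec 1 1) (charmatrix N2)).det with hP
  set R : ℝ[X] := (charmatrix N1).det * (charmatrix N2 + vecMulVec 1 1).det
      + (charmatrix N2).det * (charmatrix N1 + vecMulVec 1 1).det
      - (charmatrix N1 + vecMulVec 1 1).det * (charmatrix N2 + vecMulVec 1 1).det with hR
  have hevP : ∀ μ : ℝ, Polynomial.eval μ P =
      (fromBlocks (μ • 1 - N1) (-vecMulVec 1 1) (-vecMulVec 1 1) (μ • 1 - N2)).det := by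
    intro μ
    rw [hP, eval_det_map]
    congr 1
    ext i j
    rcases i with i | i <;> rcases j with j | j
    · by_cases h : i = j <;> simp [charmatrix_apply, h, Matrix.one_apply, vecMulVec_apply]
    · simp [vecMulVec_apply]
    · simp [vecMulVec_apply]
    · by_cases h : i = j <;> simp [charmatrix_apply, h, Matrix.one_apply, vecMulVec_apply]
  have hevA : ∀ μ : ℝ, Polynomial.eval μ (charmatrix N1).det = (μ • 1 - N1).det := by
    intro μ; rw [eval_det_map, map_charmatrix]
  have hevB : ∀ μ : ℝ, Polynomial.eval μ (charmatrix N2).det = (μ • 1 - N2).det := by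
    intro μ; rw [eval_det_map, map_charmatrix]
  have hevA' : ∀ μ : ℝ, Polynomial.eval μ (charmatrix N1 + vecMulVec 1 1).det =
      (μ • 1 - N1 + vecMulVec 1 1).det := by
    intro μ
    rw [eval_det_map]
    congr 1
    ext i j
    by_cases h : i = j <;>
      simp [charmatrix_apply, h, Matrix.one_apply, Matrix.diagonal_apply, vecMulVec_apply]
  have hevB' : ∀ μ : ℝ, Polynomial.eval μ (charmatrix N2 + vecMulVec 1 1).det =
      (μ • 1 - N2 + vecMulVec 1 1).det := by
    intro μ
    rw [eval_det_map]
    congr 1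
    ext i j
    by_cases h : i = j <;>
      simp [charmatrix_apply, h, Matrix.one_apply, Matrix.diagonal_apply, vecMulVec_apply]
  have hPR : P = R := by
    have hp : N1.charpoly * N2.charpoly ≠ 0 :=
      ((N1.charpoly_monic).mul (N2.charpoly_monic)).ne_zero
    have hfin : {x : ℝ | (N1.charpoly * N2.charpoly).IsRoot x}.Finite :=
      Polynomial.finite_setOf_isRoot hp
    have hroot : {x : ℝ | (N1.charpoly * N2.charpoly).IsRoot x}ᶜ ⊆
        {x : ℝ | (P - R).IsRoot x} := by
      intro μ hμ
      simp only [Set.mem_compl_iff, Set.mem_setOf_eq, Polynomial.IsRoot,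
        Polynomial.eval_mul, mul_eq_zero, not_or] at hμ
      obtain ⟨h1, h2⟩ := hμ
      rw [eval_charpoly'] at h1 h2
      have key := key_generic (μ • 1 - N1) (μ • 1 - N2)
        (isUnit_iff_ne_zero.mpr h1) (isUnit_iff_ne_zero.mpr h2)
      simp only [Set.mem_setOf_eq, Polynomial.IsRoot, Polynomial.eval_sub, hR,
        Polynomial.eval_add, Polynomial.eval_mul, hevP μ, hevA μ, hevB μ, hevA' μ, hevB' μ,
        sub_eq_zero]
      rw [key]
    have hinf : {x : ℝ | (P - R).IsRoot x}.Infinite :=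
      Set.Infinite.mono hroot hfin.infinite_compl
    have := Polynomial.eq_zero_of_infinite_isRoot _ hinf
    linear_combination (norm := ring_nf) this
  have h2 := congrArg (Polynomial.eval lam) hPR
  rw [hR] at h2
  simp only [Polynomial.eval_add, Polynomial.eval_sub, Polynomial.eval_mul] at h2
  rw [hevP lam, hevA lam, hevB lam, hevA' lam, hevB' lam] at h2
  exact h2
end poly

section graphs

variable {α β : Type*} [Fintype α] [DecidableEq α] [Fintype β] [DecidableEq β]
  (G1 : SimpleGraph α) (G2 : SimpleGraph β) [DecidableRel G1.Adj] [DecidableRel G2.Adj]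

lemma gJoin_adj_ll (a b : α) : (gJoin G1 G2).Adj (Sum.inl a) (Sum.inl b) ↔ G1.Adj a b := by
  rw [gJoin, SimpleGraph.compl_adj]
  simp only [SimpleGraph.sum_adj, SimpleGraph.compl_adj, ne_eq, Sum.inl.injEq]
  constructor
  · rintro ⟨hab, h⟩
    by_contra hadj
    exact h ⟨hab, hadj⟩
  · intro h
    exact ⟨h.ne, fun hc => hc.2 h⟩

lemma gJoin_adj_rr (a b : β) : (gJoin G1 G2).Adj (Sum.inr a) (Sum.inr b) ↔ G2.Adj a b := by
  rw [gJoin, SimpleGraph.compl_adj]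
  simp only [SimpleGraph.sum_adj, SimpleGraph.compl_adj, ne_eq, Sum.inr.injEq]
  constructor
  · rintro ⟨hab, h⟩
    by_contra hadj
    exact h ⟨hab, hadj⟩
  · intro h
    exact ⟨h.ne, fun hc => hc.2 h⟩

lemma gJoin_adj_lr (a : α) (b : β) : (gJoin G1 G2).Adj (Sum.inl a) (Sum.inr b) := by
  rw [gJoin, SimpleGraph.compl_adj]
  simp [SimpleGraph.sum_adj]

lemma gJoin_adj_rl (a : β) (b : α) : (gJoin G1 G2).Adj (Sum.inr a) (Sum.inl b) := by
  rw [gJoin, SimpleGraph.compl_adj]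
  simp [SimpleGraph.sum_adj]

lemma degree_cast_eq_sum {V : Type*} [Fintype V] [DecidableEq V]
    (G : SimpleGraph V) [DecidableRel G.Adj] (v : V) :
    (G.degree v : ℝ) = ∑ w, G.adjMatrix ℝ v w := by
  have h := SimpleGraph.adjMatrix_mulVec_const_apply (G := G) (α := ℝ) (a := 1) (v := v)
  simp only [Matrix.mulVec, dotProduct, Function.const_apply, mul_one] at h
  rw [← h]

lemma gJoin_degree_inl (v : α) :
    ((gJoin G1 G2).degree (Sum.inl v) : ℝ) = G1.degree v + Fintype.card β := by
  rw [degree_cast_eq_sum, Fintype.sum_sum_type, degree_cast_eq_sum]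
  congr 1
  · apply Finset.sum_congr rfl
    intro w _
    simp [SimpleGraph.adjMatrix_apply, gJoin_adj_ll]
  · simp [SimpleGraph.adjMatrix_apply, gJoin_adj_lr]

lemma gJoin_degree_inr (v : β) :
    ((gJoin G1 G2).degree (Sum.inr v) : ℝ) = G2.degree v + Fintype.card α := by
  rw [degree_cast_eq_sum, Fintype.sum_sum_type,
    add_comm ((G2.degree v : ℝ)) ((Fintype.card α : ℝ)), degree_cast_eq_sum]
  congr 1
  · simp [SimpleGraph.adjMatrix_apply, gJoin_adj_rl]
  · apply Finset.sum_congr rfl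
    intro w _
    simp [SimpleGraph.adjMatrix_apply, gJoin_adj_rr]

lemma join_block (lam : ℝ) :
    lam • (1 : Matrix (α ⊕ β) (α ⊕ β) ℝ) - signlessLaplacian (gJoin G1 G2) =
      fromBlocks
        (lam • 1 - (signlessLaplacian G1 + (Fintype.card β : ℝ) • 1)) (-vecMulVec 1 1)
        (-vecMulVec 1 1) (lam • 1 - (signlessLaplacian G2 + (Fintype.card α : ℝ) • 1)) := by
  ext i j
  rcases i with a | a <;> rcases j with b | b
  · by_cases h : a = b <;>
      simp [signlessLaplacian, Matrix.one_apply, Matrix.diagonal_apply, h,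
        SimpleGraph.adjMatrix_apply, gJoin_adj_ll, gJoin_degree_inl, vecMulVec_apply]
  · simp [signlessLaplacian, Matrix.one_apply, SimpleGraph.adjMatrix_apply,
      gJoin_adj_lr, vecMulVec_apply, Matrix.diagonal_apply]
  · simp [signlessLaplacian, Matrix.one_apply, SimpleGraph.adjMatrix_apply,
      gJoin_adj_rl, vecMulVec_apply, Matrix.diagonal_apply]
  · by_cases h : a = b <;>
      simp [signlessLaplacian, Matrix.one_apply, Matrix.diagonal_apply, h,
        SimpleGraph.adjMatrix_apply, gJoin_adj_rr, gJoin_degree_inr, vecMulVec_apply]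

lemma compl_block (G : SimpleGraph α) [DecidableRel G.Adj] (lam p : ℝ) :
    ((Fintype.card α : ℝ) + p - lam - 2) • (1 : Matrix α α ℝ) - signlessLaplacian Gᶜ =
      -(lam • 1 - (signlessLaplacian G + p • 1) + vecMulVec 1 1) := by
  ext i j
  by_cases h : i = j
  · subst h
    have h1 : G.degree i < Fintype.card α := G.degree_lt_card_verts i
    have hd : (Gᶜ.degree i : ℝ) = (Fintype.card α : ℝ) - 1 - G.degree i := by
      rw [SimpleGraph.degree_compl,
        Nat.cast_sub (by omega : G.degree i ≤ Fintype.card α - 1),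
        Nat.cast_sub (by omega : 1 ≤ Fintype.card α)]
      push_cast
      ring
    simp only [Matrix.sub_apply, Matrix.neg_apply, Matrix.add_apply, Matrix.smul_apply,
      Matrix.one_apply_eq, signlessLaplacian, Matrix.diagonal_apply_eq,
      SimpleGraph.adjMatrix_apply, vecMulVec_apply, Pi.one_apply, smul_eq_mul, mul_one, hd]
    simp only [SimpleGraph.irrefl, if_false]
    ring
  · have hcompl : Gᶜ.Adj i j ↔ ¬ G.Adj i j := by simp [SimpleGraph.compl_adj, h]
    by_cases hadj : G.Adj i j <;>
      simp [signlessLaplacian, Matrix.one_apply, Matrix.diagonal_apply, h, hcompl, hadj,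
        vecMulVec_apply]

end graphs

/-- The complement of the disjoint union `G1 ⊕ G2` is the join
`Ḡ1 ∨ Ḡ2`; consequently the signless Laplacian characteristic polynomial of the join
`G1 ∨ G2` on `n = n1 + n2` vertices satisfies, for all `lam`,
`f_{Q(G1∨G2)}(lam) = (-1)^{n2} f_{Q1}(lam - n2) f_{Q̄2}(n - lam - 2)
  + (-1)^{n1} f_{Q2}(lam - n1) f_{Q̄1}(n - lam - 2)
  - (-1)^{n1+n2} f_{Q̄1}(n - lam - 2) f_{Q̄2}(n - lam - 2)`. -/
theorem compl_sum_and_charpoly_join {n1 n2 : ℕ}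
    (G1 : SimpleGraph (Fin n1)) (G2 : SimpleGraph (Fin n2))
    [DecidableRel G1.Adj] [DecidableRel G2.Adj] :
    (G1 ⊕g G2)ᶜ = gJoin G1ᶜ G2ᶜ ∧
    ∀ lam : ℝ,
      (lam • (1 : Matrix (Fin n1 ⊕ Fin n2) (Fin n1 ⊕ Fin n2) ℝ) -
          signlessLaplacian (gJoin G1 G2)).det =
        (-1) ^ n2 * (((lam - n2) • (1 : Matrix (Fin n1) (Fin n1) ℝ) -
              signlessLaplacian G1).det) *
            ((((n1 : ℝ) + n2 - lam - 2) • (1 : Matrix (Fin n2) (Fin n2) ℝ) -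
              signlessLaplacian G2ᶜ).det) +
        (-1) ^ n1 * (((lam - n1) • (1 : Matrix (Fin n2) (Fin n2) ℝ) -
              signlessLaplacian G2).det) *
            ((((n1 : ℝ) + n2 - lam - 2) • (1 : Matrix (Fin n1) (Fin n1) ℝ) -
              signlessLaplacian G1ᶜ).det) -
        (-1) ^ (n1 + n2) *
            ((((n1 : ℝ) + n2 - lam - 2) • (1 : Matrix (Fin n1) (Fin n1) ℝ) -
              signlessLaplacian G1ᶜ).det) *
            ((((n1 : ℝ) + n2 - lam - 2) • (1 : Matrix (Fin n2) (Fin n2) ℝ) -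
              signlessLaplacian G2ᶜ).det) := by
  constructor
  · rw [gJoin, compl_compl, compl_compl]
  intro lam
  have eA : (lam - (n2 : ℝ)) • (1 : Matrix (Fin n1) (Fin n1) ℝ) - signlessLaplacian G1 =
      lam • 1 - (signlessLaplacian G1 + (n2 : ℝ) • 1) := by
    rw [sub_smul]; abel
  have eB : (lam - (n1 : ℝ)) • (1 : Matrix (Fin n2) (Fin n2) ℝ) - signlessLaplacian G2 =
      lam • 1 - (signlessLaplacian G2 + (n1 : ℝ) • 1) := by
    rw [sub_smul]; abel
  have e1 : ((n1 : ℝ) + n2 - lam - 2) • (1 : Matrix (Fin n1) (Fin n1) ℝ) -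
      signlessLaplacian G1ᶜ =
      -(lam • 1 - (signlessLaplacian G1 + (n2 : ℝ) • 1) + vecMulVec 1 1) := by
    have h := compl_block G1 lam (n2 : ℝ)
    rwa [Fintype.card_fin] at h
  have e2 : ((n1 : ℝ) + n2 - lam - 2) • (1 : Matrix (Fin n2) (Fin n2) ℝ) -
      signlessLaplacian G2ᶜ =
      -(lam • 1 - (signlessLaplacian G2 + (n1 : ℝ) • 1) + vecMulVec 1 1) := by
    have h := compl_block G2 lam (n1 : ℝ)
    rw [Fintype.card_fin] at h
    rw [show (n1 : ℝ) + n2 - lam - 2 = (n2 : ℝ) + n1 - lam - 2 by ring]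
    exact h
  have hjb := join_block G1 G2 lam
  rw [Fintype.card_fin, Fintype.card_fin] at hjb
  rw [hjb, keyDet, eA, eB, e1, e2, Matrix.det_neg, Matrix.det_neg,
    Fintype.card_fin, Fintype.card_fin]
  rcases Nat.even_or_odd n1 with h1 | h1 <;> rcases Nat.even_or_odd n2 with h2 | h2 <;>
    simp only [pow_add, h1.neg_one_pow, h2.neg_one_pow, one_mul, mul_one, neg_mul,
      mul_neg, neg_neg] <;> ring
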